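/- In a directed graph G on vertex set V with a designated set U of input vertices, if some vertex v ∈ V is not reachable by a directed path from any vertex of U (v is non-accessible), then for every choice of edge weights consistent with G, the resulting linear system with inputs at U fails Kalman's rank condition. -/

import Mathlib

open Matrix

/-- If some state vertex `v` is not reachable by a directed path from any input vertex,
then every linear system `(A, B)` consistent with the graph fails Kalman's rank condition.
`E j i` means there is an edge from `j` to `i`; `H j i` means input `j` attaches to state `i`. -/
theorem nonaccessible_implies_uncontrollable (N M : ℕ)
    (E : Fin N → Fin N → Prop) (H : Fin M → Fin N → Prop) (v : Fin N)
    (hv : ¬ ∃ (j : Fin M) (i : Fin N), H j i ∧ Relation.ReflTransGen E i v)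
    (A : Matrix (Fin N) (Fin N) ℝ) (B : Matrix (Fin N) (Fin M) ℝ)
    (hA : ∀ i j : Fin N, A i j ≠ 0 → E j i)
    (hB : ∀ (i : Fin N) (j : Fin M), B i j ≠ 0 → H j i) :
    (Matrix.of fun (i : Fin N) (p : Fin N × Fin M) =>
        (A ^ (p.1 : ℕ) * B) i p.2).rank < N := by
  have key : ∀ k : ℕ, ∀ w : Fin N, Relation.ReflTransGen E w v →
      ∀ j, (A ^ k * B) w j = 0 := by
    intro k
    induction k with
    | zero =>
      intro w hw j
      simp only [pow_zero, Matrix.one_mul]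
      by_contra h
      exact hv ⟨j, w, hB w j h, hw⟩
    | succ k ih =>
      intro w hw j
      have hrw : A ^ (k + 1) * B = A * (A ^ k * B) := by
        rw [pow_succ', Matrix.mul_assoc]
      rw [hrw, Matrix.mul_apply]
      apply Finset.sum_eq_zero
      intro u _
      by_cases hA0 : A w u = 0
      · simp [hA0]
      · rw [ih u (Relation.ReflTransGen.head (hA w u hA0) hw) j, mul_zero]
  set K : Matrix (Fin N) (Fin N × Fin M) ℝ :=
    Matrix.of fun (i : Fin N) (p : Fin N × Fin M) => (A ^ (p.1 : ℕ) * B) i p.2 with hK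
  have hrow : ∀ p, K v p = 0 := fun p => key p.1 v Relation.ReflTransGen.refl p.2
  have hrange : LinearMap.range K.mulVecLin ≤ LinearMap.ker (LinearMap.proj v) := by
    rintro x ⟨y, rfl⟩
    simp only [LinearMap.mem_ker, LinearMap.proj_apply, Matrix.mulVecLin_apply,
      Matrix.mulVec, dotProduct]
    exact Finset.sum_eq_zero fun p _ => by rw [hrow p, zero_mul]
  have hlt : LinearMap.ker (LinearMap.proj v : (Fin N → ℝ) →ₗ[ℝ] ℝ) < ⊤ := by
    refine lt_top_iff_ne_top.mpr ?_
    intro htop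
    have : Pi.single v (1 : ℝ) ∈ LinearMap.ker (LinearMap.proj v : (Fin N → ℝ) →ₗ[ℝ] ℝ) := by
      rw [htop]; trivial
    simp [LinearMap.mem_ker] at this
  have h1 : K.rank ≤ Module.finrank ℝ
      (LinearMap.ker (LinearMap.proj v : (Fin N → ℝ) →ₗ[ℝ] ℝ)) :=
    Submodule.finrank_mono hrange
  have h2 : Module.finrank ℝ
      (LinearMap.ker (LinearMap.proj v : (Fin N → ℝ) →ₗ[ℝ] ℝ)) <
      Module.finrank ℝ (Fin N → ℝ) :=
    Submodule.finrank_lt hlt.ne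
  calc K.rank ≤ _ := h1
    _ < Module.finrank ℝ (Fin N → ℝ) := h2
    _ = N := by simp
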